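/- arXiv:2002.03837 — 2 statements merged into one kernel-verified Lean document; each statement's English description precedes it below -/
import Mathlib

section
/- Fix an integer q ≥ 2. Let ℓ ∈ ℤ with ℓ ≠ 0, let v ∈ ℤ[1/q], let k, m ∈ ℕ, and let u, w ∈ ℤ. Then there exists s ∈ ℕ with [[q^m, w],[0,1]] = [[q^k, u],[0,1]] · ([[q^ℓ, v],[0,1]])^s (as 2×2 matrices over ℚ) if and only if there exist x ∈ ℤ and s ∈ ℕ such that (m : ℤ) = k + ℓ·s, (w : ℚ) = u + v·x, and (q^ℓ − 1)·x = q^m − q^k in ℚ. -/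
/-- ℤ[1/q]: the set of rationals of the form a / q^n with a ∈ ℤ, n ∈ ℕ. -/
def ZInvQ (q : ℤ) : Set ℚ := {x : ℚ | ∃ (a : ℤ) (n : ℕ), x = (a : ℚ) / (q : ℚ) ^ n}

open Finset in
lemma matpow_aux (a b : ℚ) (s : ℕ) :
    (!![a, b; 0, 1]) ^ s = !![a ^ s, b * ∑ i ∈ range s, a ^ i; 0, 1] := by
  induction s with
  | zero => simp [Matrix.one_fin_two]
  | succ n ih =>
    rw [pow_succ, ih, Matrix.mul_fin_two, Finset.sum_range_succ]
    ext i j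
    fin_cases i <;> fin_cases j <;> simp [pow_succ] <;> ring

theorem stmt_6 (q : ℤ) (hq : 2 ≤ q) (l : ℤ) (hl : l ≠ 0) (v : ℚ) (hv : v ∈ ZInvQ q)
    (k m : ℕ) (u w : ℤ) :
    (∃ s : ℕ, !![(q : ℚ) ^ m, (w : ℚ); 0, 1] =
        !![(q : ℚ) ^ k, (u : ℚ); 0, 1] * (!![(q : ℚ) ^ l, v; 0, 1]) ^ s) ↔
    (∃ (x : ℤ) (s : ℕ), (m : ℤ) = (k : ℤ) + l * s ∧ (w : ℚ) = (u : ℚ) + v * (x : ℚ) ∧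
        ((q : ℚ) ^ l - 1) * (x : ℚ) = (q : ℚ) ^ m - (q : ℚ) ^ k) := by
  have hq0 : (0:ℚ) < (q:ℚ) := by
    have : (2:ℚ) ≤ q := by exact_mod_cast hq
    linarith
  have hq1 : (1:ℚ) < (q:ℚ) := by
    have : (2:ℚ) ≤ q := by exact_mod_cast hq
    linarith
  have hqne : (q:ℚ) ≠ 0 := ne_of_gt hq0
  have inj : Function.Injective fun n : ℤ ↦ (q:ℚ) ^ n :=
    zpow_right_injective₀ hq0 (ne_of_gt hq1)
  have hql1 : (q:ℚ) ^ l ≠ 1 := by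
    intro h
    exact hl (inj (h.trans (zpow_zero (q:ℚ)).symm))
  have hne : (q:ℚ) ^ l - 1 ≠ 0 := sub_ne_zero.mpr hql1
  have hpow : ∀ s : ℕ, (q:ℚ) ^ k * ((q:ℚ) ^ l) ^ s = (q:ℚ) ^ ((k:ℤ) + l * s) := by
    intro s
    rw [zpow_add₀ hqne, zpow_natCast, zpow_mul, zpow_natCast]
  have key : ∀ s : ℕ, ((q:ℚ) ^ l - 1) * ((q:ℚ) ^ k * ∑ i ∈ Finset.range s, ((q:ℚ) ^ l) ^ i)
      = (q:ℚ) ^ ((k:ℤ) + l * s) - (q:ℚ) ^ k := by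
    intro s
    have h1 := mul_geom_sum ((q:ℚ) ^ l) s
    rw [← hpow s]
    linear_combination (q:ℚ) ^ k * h1
  constructor
  · rintro ⟨s, hs⟩
    rw [matpow_aux, Matrix.mul_fin_two] at hs
    have h00 := congrFun (congrFun hs 0) 0
    have h01 := congrFun (congrFun hs 0) 1
    simp at h00 h01
    have hm : (m:ℤ) = (k:ℤ) + l * s := by
      apply inj
      show (q:ℚ) ^ (m:ℤ) = (q:ℚ) ^ ((k:ℤ) + l * s)
      rw [zpow_natCast, h00, hpow]
    have claim : ∃ x : ℤ, ((q:ℚ) ^ l - 1) * (x:ℚ) = (q:ℚ) ^ m - (q:ℚ) ^ k := by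
      rcases lt_or_gt_of_ne hl with hneg | hpos
      · -- l < 0
        set L : ℕ := (-l).toNat with hLdef
        have hL : (L:ℤ) = -l := Int.toNat_of_nonneg (by omega)
        have hl' : l = -(L:ℤ) := by omega
        rw [hl', neg_mul] at hm
        have hk : k = m + L * s := by omega
        refine ⟨q ^ (m + L) * ∑ i ∈ Finset.range s, (q ^ L) ^ i, ?_⟩
        have hql : (q:ℚ) ^ l = ((q:ℚ) ^ L)⁻¹ := by
          rw [hl', zpow_neg, zpow_natCast]
        have hLne : ((q:ℚ) ^ L) ≠ 0 := pow_ne_zero _ hqne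
        have h1 := mul_geom_sum ((q:ℚ) ^ L) s
        push_cast
        rw [hql, hk, pow_add, pow_add, pow_mul]
        field_simp
        linear_combination (-1 : ℚ) * h1
      · -- l > 0
        set L : ℕ := l.toNat with hLdef
        have hL : (L:ℤ) = l := Int.toNat_of_nonneg (by omega)
        have hl' : l = (L:ℤ) := by omega
        rw [hl'] at hm
        have hmk : m = k + L * s := by omega
        refine ⟨q ^ k * ∑ i ∈ Finset.range s, (q ^ L) ^ i, ?_⟩
        have hql : (q:ℚ) ^ l = (q:ℚ) ^ L := by
          rw [hl', zpow_natCast]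
        have h1 := mul_geom_sum ((q:ℚ) ^ L) s
        push_cast
        rw [hql, hmk, pow_add, pow_mul]
        linear_combination (q:ℚ) ^ k * h1
    obtain ⟨x, hx⟩ := claim
    refine ⟨x, s, hm, ?_, hx⟩
    have hk2 : ((q:ℚ) ^ l - 1) * ((q:ℚ) ^ k * ∑ i ∈ Finset.range s, ((q:ℚ) ^ l) ^ i)
        = (q:ℚ) ^ m - (q:ℚ) ^ k := by
      rw [key s, ← hm, zpow_natCast]
    have hxS : (x:ℚ) = (q:ℚ) ^ k * ∑ i ∈ Finset.range s, ((q:ℚ) ^ l) ^ i :=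
      mul_left_cancel₀ hne (hx.trans hk2.symm)
    rw [h01, hxS]
    ring
  · rintro ⟨x, s, hm, hw, hx⟩
    refine ⟨s, ?_⟩
    rw [matpow_aux, Matrix.mul_fin_two]
    have hk2 : ((q:ℚ) ^ l - 1) * ((q:ℚ) ^ k * ∑ i ∈ Finset.range s, ((q:ℚ) ^ l) ^ i)
        = (q:ℚ) ^ m - (q:ℚ) ^ k := by
      rw [key s, ← hm, zpow_natCast]
    have hxS : (x:ℚ) = (q:ℚ) ^ k * ∑ i ∈ Finset.range s, ((q:ℚ) ^ l) ^ i :=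
      mul_left_cancel₀ hne (hx.trans hk2.symm)
    ext i j
    fin_cases i <;> fin_cases j <;> simp
    · rw [hpow s, ← hm, zpow_natCast]
    · rw [hw, hxS]; ring
end

section
/- Fix an integer q ≥ 2. Let g_1, …, g_n and g be 2×2 rational matrices, each of the form [[q^k, u],[0,1]] with k ∈ ℤ and u ∈ ℤ[1/q]. Then there exist x_1, …, x_n ∈ ℕ with g_1^{x_1} · g_2^{x_2} ⋯ g_n^{x_n} = g if and only if there exist matrices h_0, h_1, …, h_n, each of the form [[q^k, u],[0,1]] with k ∈ ℕ and u ∈ ℤ (i.e., with integer entries), such that for every i ∈ {1, …, n} there exists s ∈ ℕ with h_i = h_{i−1} · g_i^s, and h_n · g^{−1} = h_0. -/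
/-- Membership in the group G: matrices [[q^k, u],[0,1]] with k ∈ ℤ, u ∈ ℤ[1/q]. -/
def InBS (q : ℤ) (A : Matrix (Fin 2) (Fin 2) ℚ) : Prop :=
  ∃ (k : ℤ) (u : ℚ), u ∈ ZInvQ q ∧ A = !![(q : ℚ) ^ k, u; 0, 1]

section Aux

variable {q : ℤ}

lemma qQ_ne_zero (hq : 2 ≤ q) : (q : ℚ) ≠ 0 := by
  have : (0:ℚ) < (q:ℚ) := by exact_mod_cast lt_of_lt_of_le zero_lt_two hq
  exact ne_of_gt this

lemma aux_mul_form (a b c d : ℚ) :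
    !![a, b; (0:ℚ), 1] * !![c, d; 0, 1] = !![a*c, a*d+b; 0, 1] := by
  rw [Matrix.mul_fin_two]; ring_nf

lemma ZInvQ.add_mem {x y : ℚ} (hq : 2 ≤ q) (hx : x ∈ ZInvQ q) (hy : y ∈ ZInvQ q) :
    x + y ∈ ZInvQ q := by
  obtain ⟨a, n, rfl⟩ := hx
  obtain ⟨b, m, rfl⟩ := hy
  refine ⟨a * q ^ m + b * q ^ n, n + m, ?_⟩
  have hq0 := qQ_ne_zero hq
  push_cast
  rw [div_add_div _ _ (pow_ne_zero _ hq0) (pow_ne_zero _ hq0), pow_add]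
  ring_nf

lemma ZInvQ.mul_mem {x y : ℚ} (hx : x ∈ ZInvQ q) (hy : y ∈ ZInvQ q) :
    x * y ∈ ZInvQ q := by
  obtain ⟨a, n, rfl⟩ := hx
  obtain ⟨b, m, rfl⟩ := hy
  refine ⟨a * b, n + m, ?_⟩
  push_cast
  rw [pow_add]
  ring

lemma ZInvQ.zpow_mem (hq : 2 ≤ q) (k : ℤ) : (q : ℚ) ^ k ∈ ZInvQ q := by
  have hq0 := qQ_ne_zero hq
  refine ⟨q ^ (k + (-k).toNat).toNat, (-k).toNat, ?_⟩
  have h1 : (0:ℤ) ≤ k + (-k).toNat := by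
    have := Int.self_le_toNat (-k); omega
  have h2 : (((k + (-k).toNat).toNat : ℤ)) = k + (-k).toNat := Int.toNat_of_nonneg h1
  push_cast
  rw [← zpow_natCast (q:ℚ) (k + (-k).toNat).toNat, ← zpow_natCast (q:ℚ) (-k).toNat]
  rw [show (((k + (-k).toNat).toNat : ℤ)) = k + ((-k).toNat : ℤ) from h2]
  rw [zpow_add₀ hq0, mul_div_assoc, div_self (zpow_ne_zero _ hq0), mul_one]

lemma InBS.mul (hq : 2 ≤ q) {A B : Matrix (Fin 2) (Fin 2) ℚ}
    (hA : InBS q A) (hB : InBS q B) : InBS q (A * B) := by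
  obtain ⟨k, u, hu, rfl⟩ := hA
  obtain ⟨l, v, hv, rfl⟩ := hB
  refine ⟨k + l, (q:ℚ)^k * v + u, ZInvQ.add_mem hq (ZInvQ.mul_mem (ZInvQ.zpow_mem hq k) hv) hu, ?_⟩
  rw [aux_mul_form, zpow_add₀ (qQ_ne_zero hq)]

lemma InBS.one (_hq : 2 ≤ q) : InBS q (1 : Matrix (Fin 2) (Fin 2) ℚ) := by
  refine ⟨0, 0, ⟨0, 0, by norm_num⟩, ?_⟩
  simp [Matrix.one_fin_two]

lemma InBS.pow (hq : 2 ≤ q) {A : Matrix (Fin 2) (Fin 2) ℚ} (hA : InBS q A) (m : ℕ) :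
    InBS q (A ^ m) := by
  induction m with
  | zero => simpa using InBS.one hq
  | succ m ih => rw [pow_succ]; exact ih.mul hq hA

lemma InBS.list_prod (hq : 2 ≤ q) {l : List (Matrix (Fin 2) (Fin 2) ℚ)}
    (hl : ∀ A ∈ l, InBS q A) : InBS q l.prod := by
  induction l with
  | nil => simpa using InBS.one hq
  | cons A l ih =>
      rw [List.prod_cons]
      exact (hl A List.mem_cons_self).mul hq (ih fun B hB => hl B (List.mem_cons_of_mem _ hB))

lemma InBS.isUnit_det (hq : 2 ≤ q) {A : Matrix (Fin 2) (Fin 2) ℚ} (hA : InBS q A) :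
    IsUnit A.det := by
  obtain ⟨k, u, _, rfl⟩ := hA
  rw [isUnit_iff_ne_zero]
  simp [Matrix.det_fin_two_of, zpow_ne_zero _ (qQ_ne_zero hq)]

lemma take_ofFn_succ {α : Type*} [Monoid α] {n : ℕ} (f : Fin n → α) (i : Fin n) :
    ((List.ofFn f).take ((i:ℕ)+1)).prod = ((List.ofFn f).take (i:ℕ)).prod * f i := by
  have hi : (i:ℕ) < (List.ofFn f).length := by simp
  rw [List.prod_take_succ _ _ hi]
  congr 1
  simp

end Aux

theorem stmt_12 (q : ℤ) (hq : 2 ≤ q) (n : ℕ)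
    (g : Fin n → Matrix (Fin 2) (Fin 2) ℚ) (g₀ : Matrix (Fin 2) (Fin 2) ℚ)
    (hg : ∀ i : Fin n, InBS q (g i)) (hg₀ : InBS q g₀) :
    (∃ x : Fin n → ℕ, (List.ofFn fun i : Fin n => g i ^ x i).prod = g₀) ↔
    (∃ h : Fin (n + 1) → Matrix (Fin 2) (Fin 2) ℚ,
      (∀ i : Fin (n + 1), ∃ (k : ℕ) (u : ℤ), h i = !![(q : ℚ) ^ k, (u : ℚ); 0, 1]) ∧
      (∀ i : Fin n, ∃ s : ℕ, h i.succ = h i.castSucc * g i ^ s) ∧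
      h (Fin.last n) * g₀⁻¹ = h 0) := by
  have hq0 : (q:ℚ) ≠ 0 := qQ_ne_zero hq
  constructor
  · rintro ⟨x, hx⟩
    set L := List.ofFn (fun i : Fin n => g i ^ x i) with hL
    have hlen : L.length = n := List.length_ofFn
    set P : Fin (n+1) → Matrix (Fin 2) (Fin 2) ℚ := fun i => (L.take i).prod with hP
    have hPmem : ∀ i, InBS q (P i) := by
      intro i
      apply InBS.list_prod hq
      intro A hA
      have hA' : A ∈ L := List.mem_of_mem_take hA
      rw [hL, List.mem_ofFn] at hA'
      obtain ⟨j, rfl⟩ := hA'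
      exact (hg j).pow hq (x j)
    choose k u hu hPk using hPmem
    choose a m ha using hu
    set N : ℕ := Finset.univ.sup (fun i => m i ⊔ (-(k i)).toNat) with hN
    have hmN : ∀ i, m i ≤ N := by
      intro i
      have h1 : m i ⊔ (-(k i)).toNat ≤ N :=
        Finset.le_sup (f := fun i => m i ⊔ (-(k i)).toNat) (Finset.mem_univ i)
      exact le_trans le_sup_left h1
    have hkN : ∀ i, (0:ℤ) ≤ (N:ℤ) + k i := by
      intro i
      have h1 : m i ⊔ (-(k i)).toNat ≤ N :=
        Finset.le_sup (f := fun i => m i ⊔ (-(k i)).toNat) (Finset.mem_univ i)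
      have h1' : (-(k i)).toNat ≤ N := le_trans le_sup_right h1
      have h2 := Int.self_le_toNat (-(k i))
      omega
    set D : Matrix (Fin 2) (Fin 2) ℚ := !![(q:ℚ)^N, 0; 0, 1] with hD
    refine ⟨fun i => D * P i, ?_, ?_, ?_⟩
    · intro i
      refine ⟨((N:ℤ) + k i).toNat, a i * q ^ (N - m i), ?_⟩
      have e1 : (q:ℚ)^N * (q:ℚ)^(k i) = (q:ℚ)^(((N:ℤ) + k i).toNat) := by
        rw [← zpow_natCast (q:ℚ) N, ← zpow_natCast (q:ℚ) ((N:ℤ) + k i).toNat,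
          Int.toNat_of_nonneg (hkN i), zpow_add₀ hq0]
      have e2 : (q:ℚ)^N * u i + 0 = ((a i * q ^ (N - m i) : ℤ) : ℚ) := by
        rw [add_zero, ha i]
        push_cast
        calc (q:ℚ)^N * ((a i : ℚ) / (q:ℚ)^(m i))
            = (a i : ℚ) * ((q:ℚ)^N / (q:ℚ)^(m i)) := by ring
          _ = (a i : ℚ) * (q:ℚ)^(N - m i) := by
              congr 1
              rw [div_eq_iff (pow_ne_zero _ hq0), ← pow_add, Nat.sub_add_cancel (hmN i)]
      show D * P i = _
      rw [hPk i, hD, aux_mul_form, e1, e2]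
    · intro i
      refine ⟨x i, ?_⟩
      show D * P i.succ = D * P i.castSucc * g i ^ x i
      rw [mul_assoc]
      congr 1
      show (L.take (i.succ : Fin (n+1)).val).prod = (L.take (i.castSucc : Fin (n+1)).val).prod * g i ^ x i
      rw [Fin.val_succ, Fin.coe_castSucc]
      exact take_ofFn_succ _ i
    · have h1 : P (Fin.last n) = g₀ := by
        show (L.take (Fin.last n).val).prod = g₀
        rw [Fin.val_last, ← hlen, List.take_length, hx]
      have h0 : P 0 = 1 := by simp [hP]
      show D * P (Fin.last n) * g₀⁻¹ = D * P 0
      rw [h1, h0, mul_one, mul_assoc, Matrix.mul_nonsing_inv _ (hg₀.isUnit_det hq), mul_one]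
  · rintro ⟨h, hform, hstep, hlast⟩
    choose s hs using hstep
    refine ⟨s, ?_⟩
    set L := List.ofFn (fun i : Fin n => g i ^ s i) with hL
    have key : ∀ i : Fin (n+1), h i = h 0 * (L.take i).prod := by
      intro i
      induction i using Fin.induction with
      | zero => simp
      | succ i ih =>
          rw [hs i, ih, mul_assoc]
          congr 1
          show (L.take (i.castSucc : Fin (n+1)).val).prod * g i ^ s i = (L.take (i.succ : Fin (n+1)).val).prod
          rw [Fin.val_succ, Fin.coe_castSucc]
          exact (take_ofFn_succ _ i).symm
    have h1 := key (Fin.last n)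
    have hlenL : L.length = n := List.length_ofFn
    have htake : L.take n = L := by rw [← hlenL]; exact List.take_length
    rw [Fin.val_last, htake] at h1
    rw [h1] at hlast
    obtain ⟨k0, u0, hh0⟩ := hform 0
    have hdet0 : IsUnit (h 0).det := by
      rw [hh0, isUnit_iff_ne_zero]
      simp [Matrix.det_fin_two_of, pow_ne_zero _ hq0]
    have h2 : L.prod * g₀⁻¹ = 1 := by
      have := congrArg (fun M => (h 0)⁻¹ * M) hlast
      rwa [← mul_assoc, ← mul_assoc, Matrix.nonsing_inv_mul _ hdet0, one_mul] at this
    calc L.prod = L.prod * (g₀⁻¹ * g₀) := by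
          rw [Matrix.nonsing_inv_mul _ (hg₀.isUnit_det hq), mul_one]
      _ = (L.prod * g₀⁻¹) * g₀ := by rw [mul_assoc]
      _ = g₀ := by rw [h2, one_mul]
end
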